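/- For 2 ≤ r ≤ n-1, every permutation σ ∈ S_n satisfies σ ≤ r·ω_r or σ ≥ r·e_r in the Bruhat order (where r·ω_r = r,n,n-1,...,r+1,r-1,...,1 and r·e_r = r,1,2,...,r-1,r+1,...,n in one-line notation). Consequently S_n = [e, r·ω_r] ∪ [r·e_r, ω] as a union of Bruhat intervals. -/

import Mathlib

/-- Number of inversions (Coxeter length) of a permutation of `Fin n`. -/
def invCount {n : ℕ} (σ : Equiv.Perm (Fin n)) : ℕ :=
  ((Finset.univ : Finset (Fin n × Fin n)).filter
    (fun p => p.1 < p.2 ∧ σ p.2 < σ p.1)).card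

/-- Covering relation of the strong Bruhat order: multiply by a transposition
(on values) and increase the length by exactly one. -/
def BruhatCover {n : ℕ} (u v : Equiv.Perm (Fin n)) : Prop :=
  (∃ a b : Fin n, a ≠ b ∧ v = Equiv.swap a b * u) ∧ invCount v = invCount u + 1

/-- The strong Bruhat order on `Equiv.Perm (Fin n)`. -/
def BruhatLE {n : ℕ} : Equiv.Perm (Fin n) → Equiv.Perm (Fin n) → Prop :=
  Relation.ReflTransGen BruhatCover

/-- Sum of the first `j` one-line values of `σ` (values taken in `{1, …, n}`). -/
def firstSum {n : ℕ} (σ : Equiv.Perm (Fin n)) (j : ℕ) : ℕ :=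
  ∑ i ∈ Finset.univ.filter (fun i : Fin n => (i : ℕ) < j), ((σ i : ℕ) + 1)

namespace BA
open Equiv Finset

variable {n : ℕ}

def invSet (σ : Equiv.Perm (Fin n)) : Finset (Fin n × Fin n) :=
  (Finset.univ : Finset (Fin n × Fin n)).filter (fun p => p.1 < p.2 ∧ σ p.2 < σ p.1)

lemma invCount_eq (σ : Equiv.Perm (Fin n)) : invCount σ = (invSet σ).card := rfl

lemma val_swap (i j z : Fin n) : ((Equiv.swap i j) z : ℕ) =
    if (z:ℕ) = (i:ℕ) then (j:ℕ) else if (z:ℕ) = (j:ℕ) then (i:ℕ) else (z:ℕ) := by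
  rcases eq_or_ne z i with rfl | hzi
  · simp
  · rcases eq_or_ne z j with rfl | hzj
    · simp [Fin.val_ne_of_ne hzi]
    · simp [Equiv.swap_apply_of_ne_of_ne hzi hzj, Fin.val_ne_of_ne hzi, Fin.val_ne_of_ne hzj]

lemma adj_swap_invCount (σ : Equiv.Perm (Fin n)) (i j : Fin n) (hij : (i:ℕ)+1 = (j:ℕ))
    (h : σ i < σ j) :
    invCount (σ * Equiv.swap i j) = invCount σ + 1 := by
  classical
  set e : (Fin n × Fin n) ≃ (Fin n × Fin n) :=
    (Equiv.swap i j).prodCongr (Equiv.swap i j) with he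
  have hset : invSet (σ * Equiv.swap i j)
      = insert (i, j) ((invSet σ).map e.toEmbedding) := by
    ext ⟨x, y⟩
    simp only [invSet, Finset.mem_filter]
    simp only [invSet, mem_insert, Finset.mem_map_equiv, mem_filter, mem_univ, true_and,
      he, Equiv.prodCongr_symm, Equiv.symm_swap, Equiv.prodCongr_apply, Prod.map,
      Equiv.Perm.mul_apply, Prod.mk.injEq]
    by_cases hx2 : x = i ∧ y = j
    · obtain ⟨rfl, rfl⟩ := hx2
      simp only [Equiv.swap_apply_left, Equiv.swap_apply_right]
      constructor
      · intro _; exact Or.inl (by simp)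
      · intro _; exact ⟨Fin.lt_def.mpr (by omega), h⟩
    · by_cases hx3 : x = j ∧ y = i
      · obtain ⟨rfl, rfl⟩ := hx3
        simp only [Equiv.swap_apply_left, Equiv.swap_apply_right]
        constructor
        · rintro ⟨hlt, -⟩; exact absurd (Fin.lt_def.mp hlt) (by omega)
        · rintro (⟨h1, -⟩ | ⟨-, hlt⟩)
          · exact absurd (congrArg Fin.val h1) (by omega)
          · exact absurd h (not_lt.mpr hlt.le)
      · have hx2' : ¬((x:ℕ) = (i:ℕ) ∧ (y:ℕ) = (j:ℕ)) := by
          rintro ⟨h1, h2⟩; exact hx2 ⟨Fin.ext h1, Fin.ext h2⟩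
        have hx3' : ¬((x:ℕ) = (j:ℕ) ∧ (y:ℕ) = (i:ℕ)) := by
          rintro ⟨h1, h2⟩; exact hx3 ⟨Fin.ext h1, Fin.ext h2⟩
        have hiff : x < y ↔ Equiv.swap i j x < Equiv.swap i j y := by
          rw [Fin.lt_def, Fin.lt_def, val_swap, val_swap]
          split_ifs <;> omega
        constructor
        · rintro ⟨hxy, hv⟩; exact Or.inr ⟨hiff.mp hxy, hv⟩
        · rintro (⟨h1, h2⟩ | ⟨hlt, hv⟩)
          · exact absurd ⟨congrArg Fin.val h1, congrArg Fin.val h2⟩ hx2'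
          · exact ⟨hiff.mpr hlt, hv⟩
  have hnotmem : (i, j) ∉ (invSet σ).map e.toEmbedding := by
    rw [Finset.mem_map_equiv]
    simp only [he, Equiv.prodCongr_symm, Equiv.symm_swap, Equiv.prodCongr_apply, Prod.map,
      Equiv.swap_apply_left, Equiv.swap_apply_right, invSet, mem_filter]
    rintro ⟨-, hlt, -⟩
    exact absurd (Fin.lt_def.mp hlt) (by omega)
  rw [invCount_eq, invCount_eq, hset, Finset.card_insert_of_notMem hnotmem, Finset.card_map]

lemma invCount_inv (σ : Equiv.Perm (Fin n)) : invCount σ⁻¹ = invCount σ := by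
  classical
  have : invSet σ⁻¹ = (invSet σ).map
      ((Equiv.prodComm (Fin n) (Fin n)).trans (σ.prodCongr σ)).toEmbedding := by
    ext ⟨x, y⟩
    simp only [invSet, Finset.mem_map_equiv, mem_filter, mem_univ, true_and, Equiv.symm_trans_apply,
      Equiv.prodComm_symm, Equiv.prodCongr_symm, Equiv.prodCongr_apply, Prod.map,
      Equiv.prodComm_apply, Prod.swap]
    constructor
    · rintro ⟨h1, h2⟩
      exact ⟨by simpa using h2, by simpa using h1⟩
    · rintro ⟨h1, h2⟩
      refine ⟨?_, ?_⟩
      · have := h2; simpa using h2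
      · simpa using h1
  rw [invCount_eq, invCount_eq, this, Finset.card_map]

lemma invCount_le (σ : Equiv.Perm (Fin n)) :
    invCount σ ≤ ((Finset.univ : Finset (Fin n × Fin n)).filter (fun p => p.1 < p.2)).card := by
  apply Finset.card_le_card
  intro p hp
  simp only [invCount, mem_filter] at hp ⊢
  exact ⟨hp.1, hp.2.1⟩

lemma cover_adj (σ : Equiv.Perm (Fin n)) (i j : Fin n) (hij : (i:ℕ)+1 = (j:ℕ))
    (h : σ i < σ j) : BruhatCover σ (σ * Equiv.swap i j) :=
  ⟨⟨σ i, σ j, ne_of_lt h, (Equiv.mul_swap_eq_swap_mul σ i j).symm ▸ Equiv.mul_swap_eq_swap_mul σ i j⟩,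
    adj_swap_invCount σ i j hij h⟩

lemma cover_val (σ : Equiv.Perm (Fin n)) (a b : Fin n) (hab : (a:ℕ)+1 = (b:ℕ))
    (h : σ⁻¹ a < σ⁻¹ b) : BruhatCover σ (Equiv.swap a b * σ) := by
  refine ⟨⟨a, b, Fin.ne_of_val_ne (by omega), rfl⟩, ?_⟩
  have key := adj_swap_invCount σ⁻¹ a b hab h
  have : (Equiv.swap a b * σ)⁻¹ = σ⁻¹ * Equiv.swap a b := by
    rw [mul_inv_rev, Equiv.swap_inv]
  rw [← invCount_inv (Equiv.swap a b * σ), this, key, invCount_inv]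

lemma chain_anti (σ : Equiv.Perm (Fin n)) (m : ℕ)
    (h : ∀ i j : Fin n, m ≤ (i:ℕ) → (i:ℕ)+1 = (j:ℕ) → σ j < σ i) :
    ∀ i j : Fin n, m ≤ (i:ℕ) → i < j → σ j < σ i := by
  suffices H : ∀ jv : ℕ, ∀ (hj : jv < n) (i : Fin n), m ≤ (i:ℕ) → (i:ℕ) < jv →
      σ ⟨jv, hj⟩ < σ i by
    intro i j hm hij
    have := H (j:ℕ) j.isLt i hm (Fin.lt_def.mp hij)
    simpa using this
  intro jv
  induction jv using Nat.strong_induction_on with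
  | _ jv ih =>
    intro hj i hm hij
    rcases eq_or_lt_of_le (Nat.succ_le_of_lt hij) with heq | hlt
    · exact h i ⟨jv, hj⟩ hm (by simpa using heq)
    · have h1 : σ ⟨jv, hj⟩ < σ ⟨jv - 1, by omega⟩ :=
        h ⟨jv - 1, by omega⟩ ⟨jv, hj⟩ (by simp; omega) (by simp; omega)
      have h2 : σ ⟨jv - 1, by omega⟩ < σ i := ih (jv - 1) (by omega) (by omega) i hm (by omega)
      exact h1.trans h2

lemma chain_mono (σ : Equiv.Perm (Fin n)) (m : ℕ)
    (h : ∀ i j : Fin n, m ≤ (i:ℕ) → (i:ℕ)+1 = (j:ℕ) → σ i < σ j) :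
    ∀ i j : Fin n, m ≤ (i:ℕ) → i < j → σ i < σ j := by
  suffices H : ∀ jv : ℕ, ∀ (hj : jv < n) (i : Fin n), m ≤ (i:ℕ) → (i:ℕ) < jv →
      σ i < σ ⟨jv, hj⟩ by
    intro i j hm hij
    have := H (j:ℕ) j.isLt i hm (Fin.lt_def.mp hij)
    simpa using this
  intro jv
  induction jv using Nat.strong_induction_on with
  | _ jv ih =>
    intro hj i hm hij
    rcases eq_or_lt_of_le (Nat.succ_le_of_lt hij) with heq | hlt
    · exact h i ⟨jv, hj⟩ hm (by simpa using heq)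
    · have h1 : σ ⟨jv - 1, by omega⟩ < σ ⟨jv, hj⟩ :=
        h ⟨jv - 1, by omega⟩ ⟨jv, hj⟩ (by simp; omega) (by simp; omega)
      have h2 : σ i < σ ⟨jv - 1, by omega⟩ := ih (jv - 1) (by omega) (by omega) i hm (by omega)
      exact h2.trans h1

lemma fin_le_apply {f : Fin n → Fin n} (h : StrictMono f) (i : Fin n) : i ≤ f i :=
  @StrictMono.le_apply (Fin n) (inferInstance : LinearOrder (Fin n))
    (inferInstance : WellFoundedLT (Fin n)) f h i

/-- A strictly monotone permutation is the identity. -/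
lemma eq_one_of_strictMono (σ : Equiv.Perm (Fin n)) (h : StrictMono ⇑σ) : σ = 1 := by
  have hinv : StrictMono ⇑σ⁻¹ := by
    intro a b hab
    by_contra hc
    have : σ (σ⁻¹ b) ≤ σ (σ⁻¹ a) := h.monotone (not_lt.mp hc)
    simp only [Equiv.Perm.coe_inv, Equiv.apply_symm_apply] at this
    exact absurd hab (not_lt.mpr this)
  ext i
  have h1 : i ≤ σ i := fin_le_apply h i
  have h2 : i ≤ σ⁻¹ i := fin_le_apply hinv i
  have h3 : σ i ≤ σ (σ⁻¹ i) := h.monotone h2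
  simp only [Equiv.Perm.coe_inv, Equiv.apply_symm_apply] at h3
  exact congrArg Fin.val (le_antisymm h3 h1)

/-- A strictly antitone permutation is the reversal. -/
lemma eq_rev_of_anti (σ : Equiv.Perm (Fin n)) (h : ∀ i j : Fin n, i < j → σ j < σ i) :
    σ = Fin.revPerm := by
  have h1 : σ * Fin.revPerm = 1 := by
    apply eq_one_of_strictMono
    intro a b hab
    simp only [Equiv.Perm.mul_apply, Fin.revPerm_apply]
    exact h _ _ (Fin.rev_lt_rev.mpr hab)
  have h2 : σ = Fin.revPerm⁻¹ := mul_eq_one_iff_eq_inv.mp h1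
  rw [h2]
  rfl

/-- Helper: if `σ`'s tail is strictly decreasing and `σ,τ` agree before `i`, then `τ i ≤ σ i`. -/
lemma head_tail_le_anti (σ τ : Equiv.Perm (Fin n))
    (hσ : ∀ i j : Fin n, 0 < (i:ℕ) → i < j → σ j < σ i)
    (i : Fin n) (hi : 0 < (i:ℕ))
    (hag : ∀ k : Fin n, k < i → σ k = τ k) : τ i ≤ σ i := by
  have hσm : σ (σ⁻¹ (τ i)) = τ i := σ.apply_symm_apply (τ i)
  rcases lt_trichotomy (σ⁻¹ (τ i)) i with hlt | heq | hgt
  · have h1 : σ (σ⁻¹ (τ i)) = τ (σ⁻¹ (τ i)) := hag _ hlt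
    have h2 : τ (σ⁻¹ (τ i)) = τ i := h1.symm.trans hσm
    have h3 := τ.injective h2
    rw [h3] at hlt
    exact absurd hlt (lt_irrefl i)
  · rw [heq] at hσm; exact le_of_eq hσm.symm
  · exact le_of_lt (hσm ▸ hσ i _ hi hgt)

lemma head_tail_le_mono (σ τ : Equiv.Perm (Fin n))
    (hσ : ∀ i j : Fin n, 0 < (i:ℕ) → i < j → σ i < σ j)
    (i : Fin n) (hi : 0 < (i:ℕ))
    (hag : ∀ k : Fin n, k < i → σ k = τ k) : σ i ≤ τ i := by
  have hσm : σ (σ⁻¹ (τ i)) = τ i := σ.apply_symm_apply (τ i)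
  rcases lt_trichotomy (σ⁻¹ (τ i)) i with hlt | heq | hgt
  · have h1 : σ (σ⁻¹ (τ i)) = τ (σ⁻¹ (τ i)) := hag _ hlt
    have h2 : τ (σ⁻¹ (τ i)) = τ i := h1.symm.trans hσm
    have h3 := τ.injective h2
    rw [h3] at hlt
    exact absurd hlt (lt_irrefl i)
  · rw [heq] at hσm; exact le_of_eq hσm
  · exact le_of_lt (hσm ▸ hσ i _ hi hgt)

lemma head_tail_unique_anti (hn : 0 < n) (σ τ : Equiv.Perm (Fin n))
    (hσ : ∀ i j : Fin n, 0 < (i:ℕ) → i < j → σ j < σ i)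
    (hτ : ∀ i j : Fin n, 0 < (i:ℕ) → i < j → τ j < τ i)
    (h0 : σ ⟨0, hn⟩ = τ ⟨0, hn⟩) : σ = τ := by
  have H : ∀ iv : ℕ, ∀ hi : iv < n, σ ⟨iv, hi⟩ = τ ⟨iv, hi⟩ := by
    intro iv
    induction iv using Nat.strong_induction_on with
    | _ iv ih =>
      intro hi
      rcases Nat.eq_zero_or_pos iv with rfl | hpos
      · exact h0
      · have hag : ∀ k : Fin n, k < ⟨iv, hi⟩ → σ k = τ k := by
          intro k hk
          have := ih (k:ℕ) (Fin.lt_def.mp hk) k.isLt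
          simpa using this
        have hag' : ∀ k : Fin n, k < ⟨iv, hi⟩ → τ k = σ k := fun k hk => (hag k hk).symm
        exact le_antisymm
          (head_tail_le_anti τ σ hτ ⟨iv, hi⟩ hpos hag')
          (head_tail_le_anti σ τ hσ ⟨iv, hi⟩ hpos hag)
  exact Equiv.ext fun i => by have := H (i:ℕ) i.isLt; simpa using this

lemma head_tail_unique_mono (hn : 0 < n) (σ τ : Equiv.Perm (Fin n))
    (hσ : ∀ i j : Fin n, 0 < (i:ℕ) → i < j → σ i < σ j)
    (hτ : ∀ i j : Fin n, 0 < (i:ℕ) → i < j → τ i < τ j)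
    (h0 : σ ⟨0, hn⟩ = τ ⟨0, hn⟩) : σ = τ := by
  have H : ∀ iv : ℕ, ∀ hi : iv < n, σ ⟨iv, hi⟩ = τ ⟨iv, hi⟩ := by
    intro iv
    induction iv using Nat.strong_induction_on with
    | _ iv ih =>
      intro hi
      rcases Nat.eq_zero_or_pos iv with rfl | hpos
      · exact h0
      · have hag : ∀ k : Fin n, k < ⟨iv, hi⟩ → σ k = τ k := by
          intro k hk
          have := ih (k:ℕ) (Fin.lt_def.mp hk) k.isLt
          simpa using this
        have hag' : ∀ k : Fin n, k < ⟨iv, hi⟩ → τ k = σ k := fun k hk => (hag k hk).symm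
        exact le_antisymm
          (head_tail_le_mono σ τ hσ ⟨iv, hi⟩ hpos hag)
          (head_tail_le_mono τ σ hτ ⟨iv, hi⟩ hpos hag')
  exact Equiv.ext fun i => by have := H (i:ℕ) i.isLt; simpa using this

lemma exists_desc_step (σ : Equiv.Perm (Fin n)) (hne : σ ≠ 1) :
    ∃ σ', BruhatCover σ' σ := by
  by_cases hd : ∃ i j : Fin n, (i:ℕ)+1 = (j:ℕ) ∧ σ j < σ i
  · obtain ⟨i, j, hij, hlt⟩ := hd
    set σ' := σ * Equiv.swap i j with hσ'
    have h' : σ' i < σ' j := by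
      simpa [hσ', Equiv.Perm.mul_apply] using hlt
    have hcov := cover_adj σ' i j hij h'
    have hback : σ' * Equiv.swap i j = σ := by
      rw [hσ', mul_assoc, Equiv.swap_mul_self, mul_one]
    rw [hback] at hcov
    exact ⟨σ', hcov⟩
  · push_neg at hd
    exfalso
    apply hne
    apply eq_one_of_strictMono
    intro a b hab
    refine chain_mono σ 0 ?_ a b (Nat.zero_le _) hab
    intro i j hm hij
    have hne' : σ i ≠ σ j := fun he => (Fin.ne_of_val_ne (by omega) : i ≠ j) (σ.injective he)
    exact lt_of_le_of_ne (hd i j hij) hne'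

lemma exists_asc_step (σ : Equiv.Perm (Fin n)) (hne : σ ≠ Fin.revPerm) :
    ∃ σ', BruhatCover σ σ' := by
  by_cases hd : ∃ i j : Fin n, (i:ℕ)+1 = (j:ℕ) ∧ σ i < σ j
  · obtain ⟨i, j, hij, hlt⟩ := hd
    exact ⟨σ * Equiv.swap i j, cover_adj σ i j hij hlt⟩
  · push_neg at hd
    exfalso
    apply hne
    apply eq_rev_of_anti
    intro a b hab
    refine chain_anti σ 0 ?_ a b (Nat.zero_le _) hab
    intro i j hm hij
    have hne' : σ j ≠ σ i := fun he => (Fin.ne_of_val_ne (by omega) : i ≠ j) (σ.injective he.symm)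
    exact lt_of_le_of_ne (hd i j hij) hne'

lemma one_le_all (σ : Equiv.Perm (Fin n)) : BruhatLE 1 σ := by
  suffices H : ∀ k : ℕ, ∀ σ : Equiv.Perm (Fin n), invCount σ ≤ k → BruhatLE 1 σ from
    H (invCount σ) σ le_rfl
  intro k
  induction k with
  | zero =>
    intro σ hk
    rcases eq_or_ne σ 1 with rfl | hne
    · exact Relation.ReflTransGen.refl
    · obtain ⟨σ', hcov⟩ := exists_desc_step σ hne
      have := hcov.2
      omega
  | succ k ih =>
    intro σ hk
    rcases eq_or_ne σ 1 with rfl | hne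
    · exact Relation.ReflTransGen.refl
    · obtain ⟨σ', hcov⟩ := exists_desc_step σ hne
      have hc := hcov.2
      exact Relation.ReflTransGen.tail (ih σ' (by omega)) hcov

lemma le_rev_all (σ : Equiv.Perm (Fin n)) : BruhatLE σ Fin.revPerm := by
  set N := ((Finset.univ : Finset (Fin n × Fin n)).filter (fun p => p.1 < p.2)).card with hN
  suffices H : ∀ k : ℕ, ∀ σ : Equiv.Perm (Fin n), N - invCount σ ≤ k → BruhatLE σ Fin.revPerm from
    H N σ (by omega)
  intro k
  induction k with
  | zero =>
    intro σ hk
    rcases eq_or_ne σ Fin.revPerm with rfl | hne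
    · exact Relation.ReflTransGen.refl
    · obtain ⟨σ', hcov⟩ := exists_asc_step σ hne
      have h1 := hcov.2
      have h2 := invCount_le σ'
      have h3 := invCount_le σ
      omega
  | succ k ih =>
    intro σ hk
    rcases eq_or_ne σ Fin.revPerm with rfl | hne
    · exact Relation.ReflTransGen.refl
    · obtain ⟨σ', hcov⟩ := exists_asc_step σ hne
      have h1 := hcov.2
      have h2 := invCount_le σ'
      exact Relation.ReflTransGen.head hcov (ih σ' (by omega))

lemma up_step (hn : 0 < n) (r : ℕ) (hr : 2 ≤ r) (hrn : r + 1 ≤ n)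
    (rω : Equiv.Perm (Fin n)) (hω0 : (rω ⟨0, hn⟩ : ℕ) = r - 1)
    (hωanti : ∀ i j : Fin n, 0 < (i:ℕ) → i < j → rω j < rω i)
    (σ : Equiv.Perm (Fin n)) (hσ0 : (σ ⟨0, hn⟩ : ℕ) ≤ r - 1) (hne : σ ≠ rω) :
    ∃ σ', BruhatCover σ σ' ∧ (σ' ⟨0, hn⟩ : ℕ) ≤ r - 1 := by
  by_cases hasc : ∃ i j : Fin n, 0 < (i:ℕ) ∧ (i:ℕ)+1 = (j:ℕ) ∧ σ i < σ j
  · obtain ⟨i, j, hi, hij, hlt⟩ := hasc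
    refine ⟨σ * Equiv.swap i j, cover_adj σ i j hij hlt, ?_⟩
    have h0i : (⟨0, hn⟩ : Fin n) ≠ i := Fin.ne_of_val_ne (by simp; omega)
    have h0j : (⟨0, hn⟩ : Fin n) ≠ j := Fin.ne_of_val_ne (by simp; omega)
    rw [Equiv.Perm.mul_apply, Equiv.swap_apply_of_ne_of_ne h0i h0j]
    exact hσ0
  · push_neg at hasc
    have hanti : ∀ i j : Fin n, 0 < (i:ℕ) → i < j → σ j < σ i := by
      intro i j h0 hij
      refine chain_anti σ 1 ?_ i j (by omega) hij
      intro i' j' hm hij'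
      have hne' : σ j' ≠ σ i' := fun he =>
        (Fin.ne_of_val_ne (by omega) : i' ≠ j') (σ.injective he.symm)
      exact lt_of_le_of_ne (hasc i' j' (by omega) hij') hne'
    rcases lt_or_eq_of_le hσ0 with hσlt | hσeq
    · set a := σ ⟨0, hn⟩ with ha
      have hbn : (a:ℕ)+1 < n := by omega
      set b : Fin n := ⟨(a:ℕ)+1, hbn⟩ with hb
      have hab : (a:ℕ)+1 = (b:ℕ) := rfl
      have hj : σ⁻¹ b ≠ ⟨0, hn⟩ := by
        intro hE
        have : b = a := by rw [ha, ← hE, Equiv.Perm.coe_inv, Equiv.apply_symm_apply]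
        exact absurd (congrArg Fin.val this) (by simp [hb])
      have hinv : σ⁻¹ a < σ⁻¹ b := by
        have h1 : σ⁻¹ a = ⟨0, hn⟩ := by rw [ha, Equiv.Perm.coe_inv, Equiv.symm_apply_apply]
        rw [h1]
        exact Fin.lt_def.mpr (by have := Fin.val_ne_of_ne hj; simp at this ⊢; omega)
      refine ⟨Equiv.swap a b * σ, cover_val σ a b hab hinv, ?_⟩
      have hhead : (Equiv.swap a b * σ) ⟨0, hn⟩ = b := by
        rw [Equiv.Perm.mul_apply, ← ha, Equiv.swap_apply_left]
      rw [hhead]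
      simp [hb]; omega
    · exfalso
      exact hne (head_tail_unique_anti hn σ rω hanti hωanti (Fin.ext (by simpa [hω0] using hσeq)))

lemma down_step (hn : 0 < n) (r : ℕ) (hr : 2 ≤ r) (hrn : r + 1 ≤ n)
    (re : Equiv.Perm (Fin n)) (he0 : (re ⟨0, hn⟩ : ℕ) = r - 1)
    (hemono : ∀ i j : Fin n, 0 < (i:ℕ) → i < j → re i < re j)
    (σ : Equiv.Perm (Fin n)) (hσ0 : r - 1 ≤ (σ ⟨0, hn⟩ : ℕ)) (hne : σ ≠ re) :
    ∃ σ', BruhatCover σ' σ ∧ r - 1 ≤ (σ' ⟨0, hn⟩ : ℕ) := by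
  by_cases hdesc : ∃ i j : Fin n, 0 < (i:ℕ) ∧ (i:ℕ)+1 = (j:ℕ) ∧ σ j < σ i
  · obtain ⟨i, j, hi, hij, hlt⟩ := hdesc
    set σ' := σ * Equiv.swap i j with hσ'
    have h' : σ' i < σ' j := by
      simpa [hσ', Equiv.Perm.mul_apply] using hlt
    have hcov := cover_adj σ' i j hij h'
    have hback : σ' * Equiv.swap i j = σ := by
      rw [hσ', mul_assoc, Equiv.swap_mul_self, mul_one]
    rw [hback] at hcov
    refine ⟨σ', hcov, ?_⟩
    have h0i : (⟨0, hn⟩ : Fin n) ≠ i := Fin.ne_of_val_ne (by simp; omega)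
    have h0j : (⟨0, hn⟩ : Fin n) ≠ j := Fin.ne_of_val_ne (by simp; omega)
    rw [hσ', Equiv.Perm.mul_apply, Equiv.swap_apply_of_ne_of_ne h0i h0j]
    exact hσ0
  · push_neg at hdesc
    have hmono : ∀ i j : Fin n, 0 < (i:ℕ) → i < j → σ i < σ j := by
      intro i j h0 hij
      refine chain_mono σ 1 ?_ i j (by omega) hij
      intro i' j' hm hij'
      have hne' : σ i' ≠ σ j' := fun he =>
        (Fin.ne_of_val_ne (by omega) : i' ≠ j') (σ.injective he)
      exact lt_of_le_of_ne (hdesc i' j' (by omega) hij') hne'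
    rcases lt_or_eq_of_le hσ0 with hσlt | hσeq
    · set b := σ ⟨0, hn⟩ with hb
      have han : (b:ℕ) - 1 < n := by omega
      set a : Fin n := ⟨(b:ℕ) - 1, han⟩ with ha
      have hab : (a:ℕ)+1 = (b:ℕ) := by simp [ha]; omega
      set σ' := Equiv.swap a b * σ with hσ'
      have hjne : σ⁻¹ a ≠ ⟨0, hn⟩ := by
        intro hE
        have : a = b := by rw [hb, ← hE, Equiv.Perm.coe_inv, Equiv.apply_symm_apply]
        exact absurd (congrArg Fin.val this) (by simp [ha]; omega)
      have hinv : σ'⁻¹ a < σ'⁻¹ b := by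
        have hinv' : σ'⁻¹ = σ⁻¹ * Equiv.swap a b := by
          rw [hσ', mul_inv_rev, Equiv.swap_inv]
        have h1 : σ'⁻¹ a = ⟨0, hn⟩ := by
          rw [hinv', Equiv.Perm.mul_apply, Equiv.swap_apply_left, hb, Equiv.Perm.coe_inv, Equiv.symm_apply_apply]
        have h2 : σ'⁻¹ b = σ⁻¹ a := by
          rw [hinv', Equiv.Perm.mul_apply, Equiv.swap_apply_right]
        rw [h1, h2]
        exact Fin.lt_def.mpr (by have := Fin.val_ne_of_ne hjne; simp at this ⊢; omega)
      have hcov := cover_val σ' a b hab hinv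
      have hback : Equiv.swap a b * σ' = σ := by
        rw [hσ', ← mul_assoc, Equiv.swap_mul_self, one_mul]
      rw [hback] at hcov
      refine ⟨σ', hcov, ?_⟩
      have hhead : σ' ⟨0, hn⟩ = a := by
        rw [hσ', Equiv.Perm.mul_apply, ← hb, Equiv.swap_apply_right]
      rw [hhead]
      simp [ha]; omega
    · exfalso
      exact hne (head_tail_unique_mono hn σ re hmono hemono (Fin.ext (by simp [he0, ← hσeq])))

lemma up_main (hn : 0 < n) (r : ℕ) (hr : 2 ≤ r) (hrn : r + 1 ≤ n)
    (rω : Equiv.Perm (Fin n)) (hω0 : (rω ⟨0, hn⟩ : ℕ) = r - 1)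
    (hωanti : ∀ i j : Fin n, 0 < (i:ℕ) → i < j → rω j < rω i)
    (σ : Equiv.Perm (Fin n)) (hσ0 : (σ ⟨0, hn⟩ : ℕ) ≤ r - 1) :
    BruhatLE σ rω := by
  set N := ((Finset.univ : Finset (Fin n × Fin n)).filter (fun p => p.1 < p.2)).card with hN
  suffices H : ∀ k : ℕ, ∀ σ : Equiv.Perm (Fin n), N - invCount σ ≤ k →
      (σ ⟨0, hn⟩ : ℕ) ≤ r - 1 → BruhatLE σ rω from H N σ (by omega) hσ0
  intro k
  induction k with
  | zero =>
    intro σ hk h0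
    rcases eq_or_ne σ rω with rfl | hne
    · exact Relation.ReflTransGen.refl
    · obtain ⟨σ', hcov, h0'⟩ := up_step hn r hr hrn rω hω0 hωanti σ h0 hne
      have h1 := hcov.2
      have h2 := invCount_le σ'
      have h3 := invCount_le σ
      omega
  | succ k ih =>
    intro σ hk h0
    rcases eq_or_ne σ rω with rfl | hne
    · exact Relation.ReflTransGen.refl
    · obtain ⟨σ', hcov, h0'⟩ := up_step hn r hr hrn rω hω0 hωanti σ h0 hne
      have h1 := hcov.2
      have h2 := invCount_le σ'
      exact Relation.ReflTransGen.head hcov (ih σ' (by omega) h0')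

lemma down_main (hn : 0 < n) (r : ℕ) (hr : 2 ≤ r) (hrn : r + 1 ≤ n)
    (re : Equiv.Perm (Fin n)) (he0 : (re ⟨0, hn⟩ : ℕ) = r - 1)
    (hemono : ∀ i j : Fin n, 0 < (i:ℕ) → i < j → re i < re j)
    (σ : Equiv.Perm (Fin n)) (hσ0 : r - 1 ≤ (σ ⟨0, hn⟩ : ℕ)) :
    BruhatLE re σ := by
  suffices H : ∀ k : ℕ, ∀ σ : Equiv.Perm (Fin n), invCount σ ≤ k →
      r - 1 ≤ (σ ⟨0, hn⟩ : ℕ) → BruhatLE re σ from H (invCount σ) σ le_rfl hσ0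
  intro k
  induction k with
  | zero =>
    intro σ hk h0
    rcases eq_or_ne σ re with rfl | hne
    · exact Relation.ReflTransGen.refl
    · obtain ⟨σ', hcov, h0'⟩ := down_step hn r hr hrn re he0 hemono σ h0 hne
      have h1 := hcov.2
      omega
  | succ k ih =>
    intro σ hk h0
    rcases eq_or_ne σ re with rfl | hne
    · exact Relation.ReflTransGen.refl
    · obtain ⟨σ', hcov, h0'⟩ := down_step hn r hr hrn re he0 hemono σ h0 hne
      have h1 := hcov.2
      exact Relation.ReflTransGen.tail (ih σ' (by omega) h0') hcov

end BA
theorem bruhat_cover_by_two_intervals (n r : ℕ) (hr : 2 ≤ r) (hrn : r + 1 ≤ n)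
    (rω re : Equiv.Perm (Fin n))
    (hrω : ∀ i : Fin n, (rω i : ℕ) =
      if (i : ℕ) = 0 then r - 1
      else if (i : ℕ) ≤ n - r then n - (i : ℕ)
      else n - (i : ℕ) - 1)
    (hre : ∀ i : Fin n, (re i : ℕ) =
      if (i : ℕ) = 0 then r - 1
      else if (i : ℕ) ≤ r - 1 then (i : ℕ) - 1
      else (i : ℕ)) :
    (∀ σ : Equiv.Perm (Fin n), BruhatLE σ rω ∨ BruhatLE re σ) ∧
    (Set.univ : Set (Equiv.Perm (Fin n))) =
      {z | BruhatLE 1 z ∧ BruhatLE z rω} ∪ {z | BruhatLE re z ∧ BruhatLE z Fin.revPerm} := by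
  have hn : 0 < n := by omega
  have hω0 : (rω ⟨0, hn⟩ : ℕ) = r - 1 := by rw [hrω]; simp
  have hωanti : ∀ i j : Fin n, 0 < (i:ℕ) → i < j → rω j < rω i := by
    intro i j hi hij
    have hiv := i.isLt
    have hjv := j.isLt
    have hij' := Fin.lt_def.mp hij
    rw [Fin.lt_def, hrω, hrω]
    split_ifs <;> omega
  have he0 : (re ⟨0, hn⟩ : ℕ) = r - 1 := by rw [hre]; simp
  have hemono : ∀ i j : Fin n, 0 < (i:ℕ) → i < j → re i < re j := by
    intro i j hi hij
    have hiv := i.isLt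
    have hjv := j.isLt
    have hij' := Fin.lt_def.mp hij
    rw [Fin.lt_def, hre, hre]
    split_ifs <;> omega
  have hdich : ∀ σ : Equiv.Perm (Fin n), BruhatLE σ rω ∨ BruhatLE re σ := by
    intro σ
    rcases le_or_gt ((σ ⟨0, hn⟩ : ℕ)) (r - 1) with h | h
    · exact Or.inl (BA.up_main hn r hr hrn rω hω0 hωanti σ h)
    · exact Or.inr (BA.down_main hn r hr hrn re he0 hemono σ h.le)
  refine ⟨hdich, ?_⟩
  ext z
  simp only [Set.mem_univ, Set.mem_union, Set.mem_setOf_eq, true_iff]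
  rcases hdich z with h | h
  · exact Or.inl ⟨BA.one_le_all z, h⟩
  · exact Or.inr ⟨h, BA.le_rev_all z⟩
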